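/- arXiv:2102.09700 — 5 statements merged into one kernel-verified Lean document; each statement's English description precedes it below -/
import Mathlib

section
/- For a quadratic function f(w) = (1/2)(x^T w - y)^2 with x ≠ 0, the minimizer over α of the function ξ(α) = ‖∇f(w - α v) - ∇f(w) + v‖² satisfies α* = 1/(x^T x) whenever x^T v ≠ 0, i.e., the implicit step-size equals the reciprocal of the Lipschitz smoothness constant of f. -/
open scoped RealInnerProductSpace

/-- For a quadratic function `f w = (1/2) (⟪x, w⟫ - y)^2` with `x ≠ 0` and `⟪x, v⟫ ≠ 0`,
the unique minimizer of `ξ α = ‖∇f(w - α v) - ∇f(w) + v‖²` is `α* = 1 / ⟪x, x⟫`,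
the reciprocal of the Lipschitz smoothness constant of `f`. -/
theorem stmt0 (d : ℕ) (x v w : EuclideanSpace ℝ (Fin d)) (y : ℝ)
    (hx : x ≠ 0) (hxv : ⟪x, v⟫ ≠ 0)
    (f : EuclideanSpace ℝ (Fin d) → ℝ)
    (hf : ∀ u, f u = (1 / 2) * (⟪x, u⟫ - y) ^ 2)
    (gradf : EuclideanSpace ℝ (Fin d) → EuclideanSpace ℝ (Fin d))
    (hgradf : ∀ u, gradf u = (⟪x, u⟫ - y) • x)
    (ξ : ℝ → ℝ)
    (hξ : ∀ α : ℝ, ξ α = ‖gradf (w - α • v) - gradf w + v‖ ^ 2) :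
    (∀ α : ℝ, ξ ((⟪x, x⟫)⁻¹) ≤ ξ α) ∧
    (∀ α : ℝ, α ≠ (⟪x, x⟫)⁻¹ → ξ ((⟪x, x⟫)⁻¹) < ξ α) := by
  set c : ℝ := ⟪x, v⟫ with hc
  set s : ℝ := ⟪x, x⟫ with hs
  have hs_pos : 0 < s := by rw [hs, real_inner_self_eq_norm_sq]; exact pow_pos (norm_pos_iff.mpr hx) 2
  have hkey : ∀ α : ℝ, ξ α = ‖v‖ ^ 2 - 2 * α * c ^ 2 + α ^ 2 * c ^ 2 * s := by
    intro α
    have h1 : gradf (w - α • v) - gradf w + v = (-(α * c)) • x + v := by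
      rw [hgradf, hgradf, inner_sub_right, inner_smul_right]
      module
    rw [hξ, h1, @norm_add_sq_real, inner_smul_left, norm_smul]
    simp only [RCLike.conj_to_real, Real.norm_eq_abs]
    have hnx : ‖x‖ ^ 2 = s := real_inner_self_eq_norm_sq x ▸ rfl
    rw [mul_pow, sq_abs]
    rw [hnx]
    ring
  have hkey2 : ∀ α : ℝ, ξ α - ξ s⁻¹ = c ^ 2 * s * (α - s⁻¹) ^ 2 := by
    intro α
    rw [hkey, hkey]
    field_simp
    ring
  have hc2 : 0 < c ^ 2 := pow_pos (abs_pos.mpr hxv) 2 |>.trans_eq (sq_abs c)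
  constructor
  · intro α
    nlinarith [hkey2 α, mul_nonneg (mul_nonneg hc2.le hs_pos.le) (sq_nonneg (α - s⁻¹))]
  · intro α hα
    have h2 : (0:ℝ) < (α - s⁻¹) ^ 2 := pow_pos (abs_pos.mpr (sub_ne_zero.mpr hα)) 2 |>.trans_eq (sq_abs _)
    nlinarith [hkey2 α, mul_pos (mul_pos hc2 hs_pos) h2]
end

section
/- If a deterministic step of the recursion v_t = v_{t-1} - (∇f(w_{t-1}) - ∇f(w_t)) is taken with w_t = w_{t-1} - α_{t-1} v_{t-1}, f convex and L-smooth on the segment between w_{t-1} and w_t, and step-size α_{t-1} ≤ 2/L, then ‖v_t‖ ≤ ‖v_{t-1}‖. -/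
open scoped RealInnerProductSpace

/-- One deterministic step of the SARAH recursion: if `f` is convex and `L`-smooth on the
segment between `w₀` and `w₁ = w₀ - α • v₀` (so cocoercivity holds there), and `0 < α ≤ 2/L`,
then for `v₁ = v₀ - (∇f w₀ - ∇f w₁)` we have `‖v₁‖ ≤ ‖v₀‖`. -/
theorem stmt7 (d : ℕ) (f : EuclideanSpace ℝ (Fin d) → ℝ) (L α : ℝ)
    (hL : 0 < L) (hα : 0 < α) (hαL : α ≤ 2 / L)
    (w₀ w₁ v₀ v₁ : EuclideanSpace ℝ (Fin d))
    (hupd : w₁ = w₀ - α • v₀)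
    (hco : ⟪gradient f w₀ - gradient f w₁, w₀ - w₁⟫ ≥
      (1 / L) * ‖gradient f w₀ - gradient f w₁‖ ^ 2)
    (hv : v₁ = v₀ - (gradient f w₀ - gradient f w₁)) :
    ‖v₁‖ ≤ ‖v₀‖ := by
  set g := gradient f w₀ - gradient f w₁ with hg
  have h1 : w₀ - w₁ = α • v₀ := by rw [hupd]; abel
  have h2 : α * ⟪g, v₀⟫ ≥ (1 / L) * ‖g‖ ^ 2 := by
    rwa [h1, real_inner_smul_right] at hco
  have hαL2 : α * L ≤ 2 := by
    calc α * L ≤ (2 / L) * L := by nlinarith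
    _ = 2 := by field_simp
  have hsq : ‖v₁‖ ^ 2 ≤ ‖v₀‖ ^ 2 := by
    rw [hv, @norm_sub_sq_real]
    have hginner : ⟪v₀, g⟫ = ⟪g, v₀⟫ := real_inner_comm _ _
    have hgnn : (0:ℝ) ≤ ‖g‖ ^ 2 := by positivity
    have h3 : L * (1 / L * ‖g‖ ^ 2) ≤ L * (α * ⟪g, v₀⟫) :=
      mul_le_mul_of_nonneg_left h2 hL.le
    have h4 : ‖g‖ ^ 2 ≤ (α * L) * ⟪g, v₀⟫ := by
      have hLnz : L ≠ 0 := ne_of_gt hL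
      rw [← mul_assoc, mul_one_div_cancel hLnz, one_mul] at h3
      rw [mul_comm α L, mul_assoc]
      exact h3
    have hin : (0:ℝ) ≤ ⟪g, v₀⟫ := by nlinarith [mul_pos hα hL]
    have key : ‖g‖ ^ 2 ≤ 2 * ⟪g, v₀⟫ :=
      h4.trans (mul_le_mul_of_nonneg_right hαL2 hin)
    nlinarith [hgnn]
  nlinarith [norm_nonneg v₀, norm_nonneg v₁, hsq]
end

section
/- If local smoothness parameters satisfy L^t ≤ L for all t = 0,...,m, then H = ∑_{t=0}^m 1/L^t ≥ (m+1)/L ≥ α(m+1) for any constant step-size α ≤ 1/L. Consequently, the contraction factor σ = 1/(μH) + η_0 L^0/(2 - η_0 L^0) with η_0 = 1/L^0 is at most the classical SARAH contraction factor 1/(μα(m+1)) + αL/(2 - αL) with α = 1/L. -/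
open scoped BigOperators

/-- If local smoothness parameters satisfy `L^t ≤ L` for `t = 0, ..., m`, then
`H = ∑ 1/L^t ≥ (m+1)/L ≥ α (m+1)` for any constant step-size `α ≤ 1/L`, and consequently the
adaptive contraction factor `1/(μ H) + η₀ L⁰/(2 - η₀ L⁰)` with `η₀ = 1/L⁰` is at most the
classical SARAH contraction factor `1/(μ α (m+1)) + α L/(2 - α L)` at `α = 1/L`. -/
theorem stmt12 (μ L : ℝ) (hμ : 0 < μ) (hL : 0 < L) (m : ℕ)
    (Lt : ℕ → ℝ) (hLt : ∀ t ≤ m, 0 < Lt t) (hLtL : ∀ t ≤ m, Lt t ≤ L)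
    (η : ℕ → ℝ) (hη : ∀ t ≤ m, η t = 1 / Lt t)
    (H : ℝ) (hH : H = ∑ t ∈ Finset.range (m + 1), η t)
    (α : ℝ) (hα : 0 < α) (hαL : α ≤ 1 / L) :
    H ≥ (m + 1) / L ∧ (m + 1) / L ≥ α * (m + 1) ∧
      1 / (μ * H) + η 0 * Lt 0 / (2 - η 0 * Lt 0) ≤
        1 / (μ * ((1 / L) * (m + 1))) + (1 / L) * L / (2 - (1 / L) * L) := by
  have hHge : H ≥ (m + 1) / L := by
    rw [hH]
    have : ∑ t ∈ Finset.range (m + 1), (1 / L : ℝ) ≤ ∑ t ∈ Finset.range (m + 1), η t := by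
      apply Finset.sum_le_sum
      intro t ht
      rw [Finset.mem_range, Nat.lt_succ_iff] at ht
      rw [hη t ht]
      exact one_div_le_one_div_of_le (hLt t ht) (hLtL t ht)
    simpa [div_eq_mul_inv, mul_comm] using this
  refine ⟨hHge, ?_, ?_⟩
  · rw [ge_iff_le, div_eq_mul_inv, mul_comm (α) ((m : ℝ) + 1)]
    apply mul_le_mul_of_nonneg_left (by rwa [← one_div]) (by positivity)
  · have h0 : η 0 * Lt 0 = 1 := by
      rw [hη 0 (Nat.zero_le m)]
      field_simp [(hLt 0 (Nat.zero_le m)).ne']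
    have hL1 : (1 / L) * L = 1 := by field_simp
    rw [h0, hL1]
    have hle : μ * ((1 / L) * ((m : ℝ) + 1)) ≤ μ * H := by
      apply mul_le_mul_of_nonneg_left _ hμ.le
      calc (1 / L) * ((m : ℝ) + 1) = ((m : ℝ) + 1) / L := by ring
        _ ≤ H := hHge
    have hpos : 0 < μ * ((1 / L) * ((m : ℝ) + 1)) := by positivity
    exact add_le_add_left (one_div_le_one_div_of_le hpos hle) _
end

section
/- In Algorithm with bounded adaptive step-sizes, under the smoothness of P with constant L̄_k and step-sizes α_{t-1} ∈ [α_min^k, α_max^k] with α_max^k ≤ 1/L̄_k, the iterates satisfy ∑_{t=0}^m E[‖∇P(w_t)‖²] ≤ (2/α_min^k) E[P(w_0) - P(w*)] + (α_max^k/α_min^k) ∑_{t=0}^m E[‖∇P(w_t) - v_t‖²]. -/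
open MeasureTheory
open scoped RealInnerProductSpace BigOperators

/-- Bounded adaptive step-sizes: if `P` is `L̄_k`-smooth along the iterates and
`α_{t-1} ∈ [α_min^k, α_max^k]` with `α_max^k ≤ 1/L̄_k`, then
`∑_{t=0}^m E[‖∇P(w_t)‖²] ≤ (2/α_min^k) E[P(w₀) - P(w*)] + (α_max^k/α_min^k) ∑_{t=0}^m E[‖∇P(w_t) - v_t‖²]`. -/
theorem stmt13 (d : ℕ) {Ω : Type*} [MeasurableSpace Ω]
    (μ : Measure Ω) [IsProbabilityMeasure μ]
    (P : EuclideanSpace ℝ (Fin d) → ℝ) (wstar : EuclideanSpace ℝ (Fin d))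
    (hstar : ∀ u, P wstar ≤ P u)
    (m : ℕ) (Lbar αmin αmax : ℝ) (hLbar : 0 < Lbar)
    (hαmin : 0 < αmin) (hαminmax : αmin ≤ αmax) (hαmax : αmax ≤ 1 / Lbar)
    (α : ℕ → Ω → ℝ) (hα : ∀ t ω, αmin ≤ α t ω ∧ α t ω ≤ αmax)
    (w v : ℕ → Ω → EuclideanSpace ℝ (Fin d))
    (hupd : ∀ ω, ∀ t, 1 ≤ t → t ≤ m + 1 →
      w t ω = w (t - 1) ω - α (t - 1) ω • v (t - 1) ω)
    -- `P` is `L̄_k`-smooth on the working set containing all iterates: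
    (hsmooth : ∀ ω, ∀ t, 1 ≤ t → t ≤ m + 1 →
      P (w t ω) ≤ P (w (t - 1) ω) + ⟪gradient P (w (t - 1) ω), w t ω - w (t - 1) ω⟫
        + Lbar / 2 * ‖w t ω - w (t - 1) ω‖ ^ 2)
    (hint1 : ∀ t, Integrable (fun ω => P (w t ω)) μ)
    (hint2 : ∀ t, Integrable (fun ω => ‖gradient P (w t ω)‖ ^ 2) μ)
    (hint3 : ∀ t, Integrable (fun ω => ‖gradient P (w t ω) - v t ω‖ ^ 2) μ)
    (hint4 : ∀ t, Integrable (fun ω => ‖v t ω‖ ^ 2) μ) :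
    ∑ t ∈ Finset.range (m + 1), ∫ ω, ‖gradient P (w t ω)‖ ^ 2 ∂μ ≤
      (2 / αmin) * ∫ ω, (P (w 0 ω) - P wstar) ∂μ +
      (αmax / αmin) *
        ∑ t ∈ Finset.range (m + 1), ∫ ω, ‖gradient P (w t ω) - v t ω‖ ^ 2 ∂μ := by
  -- pointwise bound
  have key : ∀ ω, ∑ t ∈ Finset.range (m + 1), ‖gradient P (w t ω)‖ ^ 2 ≤
      (2 / αmin) * (P (w 0 ω) - P wstar) +
      (αmax / αmin) * ∑ t ∈ Finset.range (m + 1), ‖gradient P (w t ω) - v t ω‖ ^ 2 := by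
    intro ω
    have step : ∀ t ∈ Finset.range (m + 1),
        (αmin / 2) * ‖gradient P (w t ω)‖ ^ 2 ≤
          (P (w t ω) - P (w (t + 1) ω)) +
          (αmax / 2) * ‖gradient P (w t ω) - v t ω‖ ^ 2 := by
      intro t ht
      have htm : t + 1 ≤ m + 1 := by
        simp only [Finset.mem_range] at ht; omega
      have hu := hupd ω (t + 1) (by omega) htm
      have hs := hsmooth ω (t + 1) (by omega) htm
      simp only [Nat.add_sub_cancel] at hu hs
      have hdiff : w (t + 1) ω - w t ω = -(α t ω • v t ω) := by
        rw [hu]; abel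
      rw [hdiff, inner_neg_right, real_inner_smul_right, norm_neg, norm_smul] at hs
      have hnorm : (‖α t ω‖ * ‖v t ω‖) ^ 2 = (α t ω) ^ 2 * ‖v t ω‖ ^ 2 := by
        rw [mul_pow, Real.norm_eq_abs, sq_abs]
      rw [hnorm] at hs
      have hip : ⟪gradient P (w t ω), v t ω⟫ =
          (‖gradient P (w t ω)‖ ^ 2 + ‖v t ω‖ ^ 2 - ‖gradient P (w t ω) - v t ω‖ ^ 2) / 2 := by
        have := norm_sub_sq_real (gradient P (w t ω)) (v t ω)
        linarith
      rw [hip] at hs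
      have ha1 := (hα t ω).1
      have ha2 := (hα t ω).2
      have haL : Lbar * α t ω ≤ 1 := by
        rw [le_div_iff₀ hLbar] at hαmax
        nlinarith
      have hapos : 0 < α t ω := lt_of_lt_of_le hαmin ha1
      have hVnn : (0:ℝ) ≤ ‖v t ω‖ ^ 2 := by positivity
      have hgnn : (0:ℝ) ≤ ‖gradient P (w t ω)‖ ^ 2 := by positivity
      have hDnn : (0:ℝ) ≤ ‖gradient P (w t ω) - v t ω‖ ^ 2 := by positivity
      nlinarith [mul_nonneg (le_of_lt hapos) (mul_nonneg (sub_nonneg.mpr haL) hVnn),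
        mul_nonneg (sub_nonneg.mpr ha1) hgnn, mul_nonneg (sub_nonneg.mpr ha2) hDnn]
    have hsum := Finset.sum_le_sum step
    rw [Finset.sum_add_distrib, Finset.sum_range_sub' (fun t => P (w t ω)) (m + 1)] at hsum
    rw [← Finset.mul_sum, ← Finset.mul_sum] at hsum
    have hstar' := hstar (w (m + 1) ω)
    set X := ∑ t ∈ Finset.range (m + 1), ‖gradient P (w t ω)‖ ^ 2 with hX
    set Y := ∑ t ∈ Finset.range (m + 1), ‖gradient P (w t ω) - v t ω‖ ^ 2 with hY
    have hkey : αmin / 2 * X ≤ (P (w 0 ω) - P wstar) + αmax / 2 * Y := by linarith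
    have h2 : X ≤ (2 * (P (w 0 ω) - P wstar) + αmax * Y) / αmin := by
      rw [le_div_iff₀ hαmin]; nlinarith
    calc X ≤ (2 * (P (w 0 ω) - P wstar) + αmax * Y) / αmin := h2
      _ = (2 / αmin) * (P (w 0 ω) - P wstar) + (αmax / αmin) * Y := by ring
  -- integrate
  have hIg : Integrable (fun ω => ∑ t ∈ Finset.range (m + 1), ‖gradient P (w t ω)‖ ^ 2) μ :=
    integrable_finset_sum _ (fun t _ => hint2 t)
  have hID : Integrable (fun ω => ∑ t ∈ Finset.range (m + 1), ‖gradient P (w t ω) - v t ω‖ ^ 2) μ :=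
    integrable_finset_sum _ (fun t _ => hint3 t)
  have hIP : Integrable (fun ω => P (w 0 ω) - P wstar) μ :=
    (hint1 0).sub (integrable_const _)
  have hIR : Integrable (fun ω => (2 / αmin) * (P (w 0 ω) - P wstar) +
      (αmax / αmin) * ∑ t ∈ Finset.range (m + 1), ‖gradient P (w t ω) - v t ω‖ ^ 2) μ :=
    (hIP.const_mul _).add (hID.const_mul _)
  have hmono := integral_mono hIg hIR key
  rw [integral_add (hIP.const_mul _) (hID.const_mul _), integral_const_mul, integral_const_mul,
    integral_finset_sum _ (fun t _ => hint3 t)] at hmono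
  rw [integral_finset_sum _ (fun t _ => hint2 t)] at hmono
  exact hmono
end

section
/- If f is convex and L-smooth on ℝ^d, then for the update w' = w - αv with 0 < α < 2/L and v' = v - (∇f(w) - ∇f(w')), one has ‖v'‖² ≤ ‖v‖² + (1 - 2/(αL))‖v' - v‖², and consequently ‖v - v'‖² ≤ (αL/(2 - αL))(‖v‖² - ‖v'‖²). -/
open scoped RealInnerProductSpace

/-- If `f` is convex and `L`-smooth (so cocoercivity holds), then for the update
`w' = w - α v` with `0 < α < 2/L` and `v' = v - (∇f w - ∇f w')`, one has
`‖v'‖² ≤ ‖v‖² + (1 - 2/(α L)) ‖v' - v‖²`, and consequently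
`‖v - v'‖² ≤ (α L/(2 - α L)) (‖v‖² - ‖v'‖²)`. -/
theorem stmt19 (d : ℕ) (f : EuclideanSpace ℝ (Fin d) → ℝ) (L α : ℝ)
    (hL : 0 < L) (hα : 0 < α) (hαL : α < 2 / L)
    (hdiff : ∀ u, DifferentiableAt ℝ f u)
    (hconv : ConvexOn ℝ Set.univ f)
    (hco : ∀ a b : EuclideanSpace ℝ (Fin d),
      ⟪gradient f a - gradient f b, a - b⟫ ≥ (1 / L) * ‖gradient f a - gradient f b‖ ^ 2)
    (w w' v v' : EuclideanSpace ℝ (Fin d))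
    (hw' : w' = w - α • v)
    (hv' : v' = v - gradient f w + gradient f w') :
    ‖v'‖ ^ 2 ≤ ‖v‖ ^ 2 + (1 - 2 / (α * L)) * ‖v' - v‖ ^ 2 ∧
      ‖v - v'‖ ^ 2 ≤ (α * L / (2 - α * L)) * (‖v‖ ^ 2 - ‖v'‖ ^ 2) := by
  set g := gradient f w - gradient f w' with hg
  have hvv' : v' = v - g := by rw [hv', hg]; abel
  have hww' : w - w' = α • v := by rw [hw']; abel
  have hco1 := hco w w'
  rw [hww', real_inner_smul_right] at hco1
  have hαL2 : α * L < 2 := by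
    have := (lt_div_iff₀ hL).mp hαL; linarith
  have hgv : (1 / (α * L)) * ‖g‖ ^ 2 ≤ ⟪g, v⟫ := by
    have h1 : (1 / (α * L)) * ‖g‖ ^ 2 = (1 / α) * ((1 / L) * ‖g‖ ^ 2) := by
      field_simp
    rw [h1]
    calc (1 / α) * ((1 / L) * ‖g‖ ^ 2) ≤ (1 / α) * (α * ⟪g, v⟫) := by
          apply mul_le_mul_of_nonneg_left hco1 (by positivity)
      _ = ⟪g, v⟫ := by field_simp
  have hnorm : ‖v'‖ ^ 2 = ‖v‖ ^ 2 - 2 * ⟪v, g⟫ + ‖g‖ ^ 2 := by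
    rw [hvv', @norm_sub_sq_real]
  have hvg : ⟪v, g⟫ = ⟪g, v⟫ := real_inner_comm g v
  have hdiff1 : v' - v = -g := by rw [hvv']; abel
  have hdiff2 : v - v' = g := by rw [hvv']; abel
  have hn1 : ‖v' - v‖ ^ 2 = ‖g‖ ^ 2 := by rw [hdiff1, norm_neg]
  have hn2 : ‖v - v'‖ ^ 2 = ‖g‖ ^ 2 := by rw [hdiff2]
  have key : ‖v'‖ ^ 2 ≤ ‖v‖ ^ 2 + (1 - 2 / (α * L)) * ‖g‖ ^ 2 := by
    rw [hnorm, hvg]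
    have h2 : (2 / (α * L)) * ‖g‖ ^ 2 ≤ 2 * ⟪g, v⟫ := by
      have := mul_le_mul_of_nonneg_left hgv (by norm_num : (0:ℝ) ≤ 2)
      calc (2 / (α * L)) * ‖g‖ ^ 2 = 2 * ((1 / (α * L)) * ‖g‖ ^ 2) := by ring
        _ ≤ 2 * ⟪g, v⟫ := this
    linarith
  constructor
  · rw [hn1]; exact key
  · rw [hn2]
    have hpos : 0 < 2 - α * L := by linarith
    rw [div_mul_eq_mul_div, le_div_iff₀ hpos]
    have hx : 0 < α * L := by positivity
    have h3 : (2 / (α * L) - 1) * ‖g‖ ^ 2 ≤ ‖v‖ ^ 2 - ‖v'‖ ^ 2 := by linarith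
    have h4 := mul_le_mul_of_nonneg_left h3 (le_of_lt hx)
    have h5 : α * L * ((2 / (α * L) - 1) * ‖g‖ ^ 2) = (2 - α * L) * ‖g‖ ^ 2 := by
      field_simp
    linarith [h4, h5.le, h5.ge]
end
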